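/- Let X ∈ ℝ^{n×p} satisfy XᵀX = I_p, let D ∈ ℝ^{n×p}, τ ∈ ℝ, and set P_X = I_n − (1/2)XXᵀ, U = [P_X D, X] ∈ ℝ^{n×2p}, V = [X, −P_X D] ∈ ℝ^{n×2p}. If the matrix I_{2p} + (τ/2)VᵀU is invertible, then the Cayley-transform retraction point Y = X − τ U (I_{2p} + (τ/2)VᵀU)^{-1} Vᵀ X satisfies YᵀY = I_p, i.e., Y lies on the Stiefel manifold. -/

import Mathlib

open Matrix

/-- Feasibility of the Wen–Yin Cayley transform retraction on the Stiefel
manifold: the retraction point `Y` satisfies `YᵀY = 1`. -/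
theorem cayley_retraction_feasible {n p : ℕ}
    (X D : Matrix (Fin n) (Fin p) ℝ) (hX : Xᵀ * X = 1) (τ : ℝ)
    (PX : Matrix (Fin n) (Fin n) ℝ) (hPX : PX = 1 - (1 / 2 : ℝ) • (X * Xᵀ))
    (U V : Matrix (Fin n) (Fin p ⊕ Fin p) ℝ)
    (hU : U = Matrix.fromCols (PX * D) X)
    (hV : V = Matrix.fromCols X (-(PX * D)))
    (hinv : IsUnit ((1 : Matrix (Fin p ⊕ Fin p) (Fin p ⊕ Fin p) ℝ)
      + (τ / 2) • (Vᵀ * U)))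
    (Y : Matrix (Fin n) (Fin p) ℝ)
    (hY : Y = X - τ • (U * ((1 : Matrix (Fin p ⊕ Fin p) (Fin p ⊕ Fin p) ℝ)
      + (τ / 2) • (Vᵀ * U))⁻¹ * (Vᵀ * X))) :
    Yᵀ * Y = 1 := by
  set M : Matrix (Fin p ⊕ Fin p) (Fin p ⊕ Fin p) ℝ :=
    (1 : Matrix (Fin p ⊕ Fin p) (Fin p ⊕ Fin p) ℝ) + (τ / 2) • (Vᵀ * U) with hM
  set N : Matrix (Fin p ⊕ Fin p) (Fin p ⊕ Fin p) ℝ := M⁻¹ with hN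
  set J : Matrix (Fin p ⊕ Fin p) (Fin p ⊕ Fin p) ℝ :=
    fromBlocks 0 (-1) 1 0 with hJdef
  have hJT : Jᵀ = -J := by
    simp [hJdef, Matrix.fromBlocks_transpose, Matrix.fromBlocks_neg]
  have hJJ : J * Jᵀ = 1 := by
    rw [hJT, hJdef]
    simp [Matrix.fromBlocks_multiply, ← Matrix.fromBlocks_one, Matrix.fromBlocks_neg]
  have hVUJ : V = U * J := by
    rw [hU, hV, hJdef, fromCols_mul_fromBlocks]
    simp
  have hNM : N * M = 1 := Matrix.nonsing_inv_mul M ((Matrix.isUnit_iff_isUnit_det M).mp hinv)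
  have hMN : M * N = 1 := Matrix.mul_nonsing_inv M ((Matrix.isUnit_iff_isUnit_det M).mp hinv)
  have hMJ : M = 1 + (τ / 2) • (Jᵀ * (Uᵀ * U)) := by
    rw [hM, hVUJ]; simp [Matrix.transpose_mul, Matrix.mul_assoc]
  have hMT : Mᵀ = 1 + (τ / 2) • (Uᵀ * U * J) := by
    rw [hM, hVUJ]
    simp [Matrix.transpose_add, Matrix.transpose_smul, Matrix.transpose_mul, Matrix.mul_assoc]
  have hkey : J * M + Mᵀ * Jᵀ = τ • (Uᵀ * U) := by
    rw [hMT, hMJ, hJT]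
    have h1 : J * (Jᵀ * (Uᵀ * U)) = Uᵀ * U := by rw [← Matrix.mul_assoc, hJJ, Matrix.one_mul]
    have h2 : (Uᵀ * U * J) * Jᵀ = Uᵀ * U := by rw [Matrix.mul_assoc, hJJ, Matrix.mul_one]
    rw [hJT] at h1 h2
    simp only [Matrix.mul_add, Matrix.add_mul, Matrix.mul_one, Matrix.one_mul,
      Matrix.mul_smul, Matrix.smul_mul, h1, h2]
    module
  have hZ : Nᵀ * J + Jᵀ * N = τ • (Nᵀ * (Uᵀ * U) * N) := by
    have hNTMT : Nᵀ * Mᵀ = 1 := by rw [← Matrix.transpose_mul, hMN, Matrix.transpose_one]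
    calc Nᵀ * J + Jᵀ * N
        = Nᵀ * (J * M + Mᵀ * Jᵀ) * N := by
          rw [Matrix.mul_add, Matrix.add_mul]
          rw [← Matrix.mul_assoc Nᵀ J M, Matrix.mul_assoc (Nᵀ * J) M N, hMN, Matrix.mul_one,
            ← Matrix.mul_assoc Nᵀ Mᵀ Jᵀ, hNTMT, Matrix.one_mul]
      _ = τ • (Nᵀ * (Uᵀ * U) * N) := by rw [hkey, Matrix.mul_smul, Matrix.smul_mul]
  have hUX : Uᵀ * X = J * (Vᵀ * X) := by
    rw [hVUJ, Matrix.transpose_mul, ← Matrix.mul_assoc, ← Matrix.mul_assoc, hJJ, Matrix.one_mul]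
  set b : Matrix (Fin p ⊕ Fin p) (Fin p) ℝ := Vᵀ * X with hb
  rw [hY]
  have hYT : (X - τ • (U * N * b))ᵀ = Xᵀ - τ • (bᵀ * Nᵀ * Uᵀ) := by
    simp [Matrix.transpose_sub, Matrix.transpose_smul, Matrix.transpose_mul, Matrix.mul_assoc]
  rw [hYT]
  rw [Matrix.sub_mul, Matrix.mul_sub, Matrix.mul_sub]
  have hXU : Xᵀ * U = bᵀ * Jᵀ := by
    have := congrArg Matrix.transpose hUX
    simpa [Matrix.transpose_mul] using this
  have e1 : Xᵀ * (τ • (U * N * b)) = τ • (bᵀ * (Jᵀ * N) * b) := by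
    rw [Matrix.mul_smul]
    congr 1
    calc Xᵀ * (U * N * b) = (Xᵀ * U) * (N * b) := by simp only [Matrix.mul_assoc]
      _ = bᵀ * Jᵀ * (N * b) := by rw [hXU]
      _ = bᵀ * (Jᵀ * N) * b := by simp only [Matrix.mul_assoc]
  have e2 : (τ • (bᵀ * Nᵀ * Uᵀ)) * X = τ • (bᵀ * (Nᵀ * J) * b) := by
    rw [Matrix.smul_mul]
    congr 1
    simp only [Matrix.mul_assoc, hUX]
  have e3 : (τ • (bᵀ * Nᵀ * Uᵀ)) * (τ • (U * N * b))
      = τ • (bᵀ * (Nᵀ * J) * b) + τ • (bᵀ * (Jᵀ * N) * b) := by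
    rw [Matrix.smul_mul, Matrix.mul_smul, smul_smul, mul_smul]
    have h1 : bᵀ * Nᵀ * Uᵀ * (U * N * b) = bᵀ * (Nᵀ * (Uᵀ * U) * N) * b := by
      simp only [Matrix.mul_assoc]
    rw [h1]
    have h2 : τ • (bᵀ * (Nᵀ * (Uᵀ * U) * N) * b) = bᵀ * (Nᵀ * J + Jᵀ * N) * b := by
      rw [hZ, Matrix.mul_smul, Matrix.smul_mul]
    rw [h2, Matrix.mul_add, Matrix.add_mul, smul_add]
  rw [e1, e2, e3, hX]
  abel
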